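/- Let A ⊆ [0,∞) be any set and let 0 ≤ S < T be real numbers. Define D := {t ∈ [0,∞) : ∃ s ∈ [S,T], t+s ∈ A}. Then the frontier of D in [0,∞) is contained in {t ∈ [0,∞) : t+S ∈ ∂A} ∪ {t ∈ [0,∞) : t+T ∈ ∂A}, where ∂A denotes the frontier of A in the subspace topology of [0,∞) ⊆ ℝ. -/

import Mathlib

open scoped NNReal Topology
open Filter

/-- If `t + r` lies in the interior of `A` for some `r ∈ [S,T]`, then `t` is in the
interior of `D`. -/
lemma stmt_10_aux (A : Set ℝ≥0) (S T : ℝ≥0) (t r : ℝ≥0) (hr : r ∈ Set.Icc S T)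
    (h : t + r ∈ interior A) :
    t ∈ interior {t : ℝ≥0 | ∃ s ∈ Set.Icc S T, t + s ∈ A} := by
  have hopen : IsOpen ((fun x : ℝ≥0 => x + r) ⁻¹' interior A) :=
    isOpen_interior.preimage (by continuity)
  refine interior_maximal ?_ hopen h
  intro x hx
  exact ⟨r, hr, interior_subset hx⟩

theorem stmt_10 (A : Set ℝ≥0) (S T : ℝ≥0) (hST : S < T) :
    frontier {t : ℝ≥0 | ∃ s ∈ Set.Icc S T, t + s ∈ A} ⊆
      {t : ℝ≥0 | t + S ∈ frontier A} ∪ {t : ℝ≥0 | t + T ∈ frontier A} := by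
  set D : Set ℝ≥0 := {t : ℝ≥0 | ∃ s ∈ Set.Icc S T, t + s ∈ A} with hD
  intro t ht
  by_contra hcon
  simp only [Set.mem_union, Set.mem_setOf_eq, not_or] at hcon
  obtain ⟨h1, h2⟩ := hcon
  simp only [Set.mem_setOf_eq, frontier, Set.mem_diff, not_and, not_not] at h1 h2
  -- dispose of the cases where t+S or t+T is in the interior of A
  by_cases hS : t + S ∈ interior A
  · exact ht.2 (stmt_10_aux A S T t S ⟨le_refl S, hST.le⟩ hS)
  by_cases hT : t + T ∈ interior A
  · exact ht.2 (stmt_10_aux A S T t T ⟨hST.le, le_refl T⟩ hT)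
  have hS' : t + S ∉ closure A := fun h => hS (h1 h)
  have hT' : t + T ∉ closure A := fun h => hT (h2 h)
  -- from t ∈ closure D, extract a sequence and a limit point s₀ ∈ [S,T]
  obtain ⟨x, hxD, hxt⟩ := mem_closure_iff_seq_limit.mp ht.1
  choose s hsIcc hsA using hxD
  obtain ⟨s₀, hs₀Icc, φ, hφ, hφtend⟩ := isCompact_Icc.tendsto_subseq hsIcc
  have hxφ : Tendsto (x ∘ φ) atTop (𝓝 t) := hxt.comp hφ.tendsto_atTop
  have htend : Tendsto (fun n => x (φ n) + s (φ n)) atTop (𝓝 (t + s₀)) :=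
    hxφ.add hφtend
  have hcl : t + s₀ ∈ closure A :=
    mem_closure_of_tendsto htend (Eventually.of_forall fun n => hsA (φ n))
  have hS0 : S < s₀ := lt_of_le_of_ne hs₀Icc.1 (by rintro rfl; exact hS' hcl)
  have hT0 : s₀ < T := lt_of_le_of_ne hs₀Icc.2 (by rintro rfl; exact hT' hcl)
  -- find a point a ∈ A strictly between t+S and t+T
  obtain ⟨a, haIoo, haA⟩ := (mem_closure_iff.mp hcl) (Set.Ioo (t + S) (t + T))
    isOpen_Ioo ⟨by exact add_lt_add_right hS0 t, by exact add_lt_add_right hT0 t⟩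
  -- then the open set {t' | t'+S < a < t'+T} is a neighborhood of t inside D
  have hU : IsOpen ({t' : ℝ≥0 | t' + S < a} ∩ {t' : ℝ≥0 | a < t' + T}) := by
    apply IsOpen.inter
    · exact isOpen_Iio.preimage (by continuity)
    · exact isOpen_Ioi.preimage (by continuity)
  apply ht.2
  refine interior_maximal ?_ hU ⟨haIoo.1, haIoo.2⟩
  rintro t' ⟨h1', h2'⟩
  have hle : t' ≤ a := le_trans (le_add_right le_rfl) h1'.le
  refine ⟨a - t', ⟨?_, ?_⟩, ?_⟩
  · exact (le_tsub_iff_left hle).mpr h1'.le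
  · exact tsub_le_iff_left.mpr h2'.le
  · rwa [add_tsub_cancel_of_le hle]
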